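/- Let L be the n×n lower triangular matrix with [L]_{ij} = 1 if i ≥ j and 0 otherwise. Let D_c, D_μ, D_b be diagonal n×n matrices with diagonal entries c_i, μ_i, b_i respectively, and suppose |μ_i − b_j| ≤ d for all i ≥ j, where d ≥ 0. Let N be the 2n×2n block matrix N = [[L·D_c, D_μ·L − L·D_b], [0, L]]. Then the ℓ²-operator norm satisfies ‖N‖² ≤ (c_max² + 1 + d²)·n², where c_max = max_{1 ≤ i ≤ n} |c_i|. -/

import Mathlib

open scoped Matrix.Norms.L2Operator

/-- The squared ℓ²-operator norm is bounded by the sum of squared entries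
(Frobenius norm squared). -/
lemma l2_opNorm_sq_le_sum_sq {m k : Type*} [Fintype m] [Fintype k] [DecidableEq k]
    (A : Matrix m k ℝ) (S : ℝ) (hS : ∑ i, ∑ j, (A i j) ^ 2 ≤ S) :
    ‖A‖ ^ 2 ≤ S := by
  have hsum0 : (0:ℝ) ≤ ∑ i, ∑ j, (A i j) ^ 2 :=
    Finset.sum_nonneg fun i _ => Finset.sum_nonneg fun j _ => sq_nonneg _
  have hS0 : 0 ≤ S := le_trans hsum0 hS
  have hnorm : ‖A‖ ≤ Real.sqrt S := by
    rw [Matrix.l2_opNorm_def]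
    refine ContinuousLinearMap.opNorm_le_bound _ (Real.sqrt_nonneg S) ?_
    intro x
    have hval : ((Matrix.toEuclideanLin.trans LinearMap.toContinuousLinearMap) A) x
        = Matrix.toEuclideanLin A x := rfl
    rw [hval]
    have hy : ∀ i, (Matrix.toEuclideanLin A x) i = ∑ j, A i j * x j := by
      intro i
      rw [Matrix.toEuclideanLin_apply]
      rfl
    have hsq : ‖Matrix.toEuclideanLin A x‖ ^ 2 ≤ S * ‖x‖ ^ 2 := by
      rw [EuclideanSpace.norm_eq, EuclideanSpace.norm_eq,
        Real.sq_sqrt (Finset.sum_nonneg fun i _ => sq_nonneg _),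
        Real.sq_sqrt (Finset.sum_nonneg fun i _ => sq_nonneg _)]
      simp only [Real.norm_eq_abs, sq_abs]
      calc ∑ i, (Matrix.toEuclideanLin A x) i ^ 2
          ≤ ∑ i, (∑ j, (A i j) ^ 2) * ∑ j, (x j) ^ 2 := by
            refine Finset.sum_le_sum fun i _ => ?_
            rw [hy i]
            exact Finset.sum_mul_sq_le_sq_mul_sq _ _ _
        _ = (∑ i, ∑ j, (A i j) ^ 2) * ∑ j, (x j) ^ 2 := by
            rw [Finset.sum_mul]
        _ ≤ S * ∑ j, (x j) ^ 2 := by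
            refine mul_le_mul_of_nonneg_right hS ?_
            exact Finset.sum_nonneg fun j _ => sq_nonneg _
    calc ‖Matrix.toEuclideanLin A x‖
        = Real.sqrt (‖Matrix.toEuclideanLin A x‖ ^ 2) := by
          rw [Real.sqrt_sq (norm_nonneg _)]
      _ ≤ Real.sqrt (S * ‖x‖ ^ 2) := Real.sqrt_le_sqrt hsq
      _ = Real.sqrt S * ‖x‖ := by
          rw [Real.sqrt_mul hS0, Real.sqrt_sq (norm_nonneg _)]
  calc ‖A‖ ^ 2 ≤ Real.sqrt S ^ 2 :=
        pow_le_pow_left₀ (norm_nonneg _) hnorm 2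
    _ = S := Real.sq_sqrt hS0

/-- upper bound on the squared ℓ²-operator norm of the block
matrix `N = [[L·D_c, D_μ·L − L·D_b], [0, L]]`. -/
theorem l2_opNorm_sq_N_le
    (n : ℕ) (d : ℝ) (hd : 0 ≤ d)
    (c μ b : Fin n → ℝ) (cmax : ℝ)
    (hcmax : IsGreatest (Set.range fun i => |c i|) cmax)
    (hμb : ∀ i j : Fin n, j ≤ i → |μ i - b j| ≤ d)
    (L : Matrix (Fin n) (Fin n) ℝ)
    (hL : ∀ i j, L i j = if j ≤ i then 1 else 0)
    (N : Matrix (Fin n ⊕ Fin n) (Fin n ⊕ Fin n) ℝ)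
    (hN : N = Matrix.fromBlocks
      (L * Matrix.diagonal c)
      (Matrix.diagonal μ * L - L * Matrix.diagonal b)
      0 L) :
    ‖N‖ ^ 2 ≤ (cmax ^ 2 + 1 + d ^ 2) * n ^ 2 := by
  have hcmax0 : 0 ≤ cmax := by
    obtain ⟨i0, hi0⟩ := hcmax.1
    rw [← hi0]; exact abs_nonneg _
  refine l2_opNorm_sq_le_sum_sq N _ ?_
  -- bound each block's entries
  have h11 : ∀ i j : Fin n, (N (Sum.inl i) (Sum.inl j)) ^ 2 ≤ cmax ^ 2 := by
    intro i j
    have : N (Sum.inl i) (Sum.inl j) = L i j * c j := by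
      rw [hN]; simp [Matrix.mul_diagonal]
    rw [this, hL]
    by_cases h : j ≤ i
    · simp only [h, if_true, one_mul]
      calc (c j) ^ 2 = |c j| ^ 2 := (sq_abs _).symm
        _ ≤ cmax ^ 2 := pow_le_pow_left₀ (abs_nonneg _) (hcmax.2 ⟨j, rfl⟩) 2
    · simp only [h, if_false, zero_mul]
      simpa using sq_nonneg cmax
  have h12 : ∀ i j : Fin n, (N (Sum.inl i) (Sum.inr j)) ^ 2 ≤ d ^ 2 := by
    intro i j
    have : N (Sum.inl i) (Sum.inr j) = μ i * L i j - L i j * b j := by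
      rw [hN]; simp [Matrix.mul_diagonal, Matrix.diagonal_mul, Matrix.sub_apply]
    rw [this, hL]
    by_cases h : j ≤ i
    · simp only [h, if_true, mul_one, one_mul]
      calc (μ i - b j) ^ 2 = |μ i - b j| ^ 2 := (sq_abs _).symm
        _ ≤ d ^ 2 := pow_le_pow_left₀ (abs_nonneg _) (hμb i j h) 2
    · simp only [h, if_false, mul_zero, zero_mul, sub_zero]
      simpa using sq_nonneg d
  have h21 : ∀ i j : Fin n, (N (Sum.inr i) (Sum.inl j)) ^ 2 = 0 := by
    intro i j
    rw [hN]; simp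
  have h22 : ∀ i j : Fin n, (N (Sum.inr i) (Sum.inr j)) ^ 2 ≤ 1 := by
    intro i j
    have : N (Sum.inr i) (Sum.inr j) = L i j := by rw [hN]; simp
    rw [this, hL]
    by_cases h : j ≤ i <;> simp [h]
  have key : ∑ i, ∑ j, (N i j) ^ 2
      ≤ (cmax ^ 2) * n ^ 2 + d ^ 2 * n ^ 2 + 0 + 1 * n ^ 2 := by
    rw [Fintype.sum_sum_type]
    have hA : ∑ i : Fin n, ∑ j, (N (Sum.inl i) j) ^ 2
        ≤ cmax ^ 2 * n ^ 2 + d ^ 2 * n ^ 2 := by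
      calc ∑ i : Fin n, ∑ j, (N (Sum.inl i) j) ^ 2
          = ∑ i : Fin n, ((∑ j : Fin n, (N (Sum.inl i) (Sum.inl j)) ^ 2)
            + ∑ j : Fin n, (N (Sum.inl i) (Sum.inr j)) ^ 2) := by
            refine Finset.sum_congr rfl fun i _ => ?_
            rw [Fintype.sum_sum_type]
        _ ≤ ∑ i : Fin n, ((∑ _j : Fin n, cmax ^ 2) + ∑ _j : Fin n, d ^ 2) := by
            refine Finset.sum_le_sum fun i _ => ?_
            exact add_le_add (Finset.sum_le_sum fun j _ => h11 i j)
              (Finset.sum_le_sum fun j _ => h12 i j)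
        _ = cmax ^ 2 * n ^ 2 + d ^ 2 * n ^ 2 := by
            simp [Finset.sum_const, Finset.card_univ]
            ring
    have hB : ∑ i : Fin n, ∑ j, (N (Sum.inr i) j) ^ 2 ≤ 0 + 1 * n ^ 2 := by
      calc ∑ i : Fin n, ∑ j, (N (Sum.inr i) j) ^ 2
          = ∑ i : Fin n, ((∑ j : Fin n, (N (Sum.inr i) (Sum.inl j)) ^ 2)
            + ∑ j : Fin n, (N (Sum.inr i) (Sum.inr j)) ^ 2) := by
            refine Finset.sum_congr rfl fun i _ => ?_
            rw [Fintype.sum_sum_type]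
        _ ≤ ∑ i : Fin n, ((∑ _j : Fin n, (0:ℝ)) + ∑ _j : Fin n, (1:ℝ)) := by
            refine Finset.sum_le_sum fun i _ => ?_
            exact add_le_add (Finset.sum_le_sum fun j _ => le_of_eq (h21 i j))
              (Finset.sum_le_sum fun j _ => h22 i j)
        _ = 0 + 1 * n ^ 2 := by
            simp [Finset.sum_const, Finset.card_univ]
            ring
    calc ∑ i : Fin n, ∑ j, (N (Sum.inl i) j) ^ 2
          + ∑ i : Fin n, ∑ j, (N (Sum.inr i) j) ^ 2
        ≤ (cmax ^ 2 * n ^ 2 + d ^ 2 * n ^ 2) + (0 + 1 * n ^ 2) := add_le_add hA hB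
      _ = cmax ^ 2 * n ^ 2 + d ^ 2 * n ^ 2 + 0 + 1 * n ^ 2 := by ring
  calc ∑ i, ∑ j, (N i j) ^ 2
      ≤ cmax ^ 2 * n ^ 2 + d ^ 2 * n ^ 2 + 0 + 1 * n ^ 2 := key
    _ = (cmax ^ 2 + 1 + d ^ 2) * n ^ 2 := by ring
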